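/- For the holomorphic disk ζ ↦ (ζ, 0, 0), |ζ| ≤ 1, in ℂ³ with boundary on the totally real submanifold B = {(z₁,z₂,z₃) ∈ ℂ³ : z₁·conj(z₁) = 1, z₁·conj(z₂) = z₂, z₁·conj(z₃) = z₃}, the tangent space to B at the boundary point (ζ,0,0) (with |ζ|=1) is the real span of the vectors (iζ, 0, 0), (0, ζ^{1/2}, 0), (0, 0, ζ^{1/2}), where ζ^{1/2} is either square root of ζ. Consequently the partial Maslov indices of this disk are (2,1,1) and its total Maslov index is 4. -/

import Mathlib

open Complex

lemma aux_a (ζ : ℂ) (hζ1 : ζ * (starRingEnd ℂ) ζ = 1) (a : ℂ) :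
    ζ * (starRingEnd ℂ) a + (starRingEnd ℂ) ζ * a = 0 ↔
      ∃ r : ℝ, a = (r : ℂ) * (Complex.I * ζ) := by
  constructor
  · intro h
    have h2 : (starRingEnd ℂ) ((starRingEnd ℂ) ζ * a) + (starRingEnd ℂ) ζ * a = 0 := by
      rw [map_mul, Complex.conj_conj]; linear_combination h
    have hre : (((starRingEnd ℂ) ζ * a).re : ℂ) = 0 := by
      have h4 := Complex.add_conj ((starRingEnd ℂ) ζ * a)
      push_cast at h4
      linear_combination (-1/2 : ℂ) * h4 + (1/2 : ℂ) * h2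
    have h3 : ((((starRingEnd ℂ) ζ * a).im : ℂ)) * Complex.I = (starRingEnd ℂ) ζ * a := by
      conv_rhs => rw [← Complex.re_add_im ((starRingEnd ℂ) ζ * a)]
      rw [hre]; ring
    exact ⟨((starRingEnd ℂ) ζ * a).im, by linear_combination (-ζ) * h3 - a * hζ1⟩
  · rintro ⟨r, rfl⟩
    simp only [map_mul, Complex.conj_I, Complex.conj_ofReal]
    ring

lemma aux_b (σ : ℂ) (hσ1 : σ * (starRingEnd ℂ) σ = 1) (b : ℂ) :
    σ ^ 2 * (starRingEnd ℂ) b = b ↔ ∃ s : ℝ, b = (s : ℂ) * σ := by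
  constructor
  · intro h
    have hreal : (starRingEnd ℂ) ((starRingEnd ℂ) σ * b) = (starRingEnd ℂ) σ * b := by
      rw [map_mul, Complex.conj_conj]
      linear_combination (starRingEnd ℂ) σ * h - (σ * (starRingEnd ℂ) b) * hσ1
    have htre : ((((starRingEnd ℂ) σ * b).re : ℂ)) = (starRingEnd ℂ) σ * b :=
      Complex.conj_eq_iff_re.mp hreal
    exact ⟨((starRingEnd ℂ) σ * b).re, by linear_combination (-σ) * htre - b * hσ1⟩
  · rintro ⟨s, rfl⟩
    simp only [map_mul, Complex.conj_ofReal]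
    linear_combination (s : ℂ) * σ * hσ1

theorem stmt_10 (ζ σ : ℂ) (hζ : ‖ζ‖ = 1) (hσ : σ ^ 2 = ζ)
    (a b c : ℂ) :
    (ζ * (starRingEnd ℂ) a + (starRingEnd ℂ) ζ * a = 0 ∧
      ζ * (starRingEnd ℂ) b = b ∧ ζ * (starRingEnd ℂ) c = c) ↔
    ((∃ r : ℝ, a = (r : ℂ) * (Complex.I * ζ)) ∧
      (∃ s : ℝ, b = (s : ℂ) * σ) ∧ (∃ u : ℝ, c = (u : ℂ) * σ)) := by
  have hζ1 : ζ * (starRingEnd ℂ) ζ = 1 := by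
    rw [Complex.mul_conj]
    norm_cast
    rw [Complex.normSq_eq_norm_sq, hζ]; norm_num
  have habsσ : ‖σ‖ = 1 := by
    have h2 : ‖σ‖ ^ 2 = 1 := by rw [← norm_pow, hσ, hζ]
    nlinarith [norm_nonneg σ]
  have hσ1 : σ * (starRingEnd ℂ) σ = 1 := by
    rw [Complex.mul_conj]
    norm_cast
    rw [Complex.normSq_eq_norm_sq, habsσ]; norm_num
  rw [aux_a ζ hζ1 a, ← hσ, aux_b σ hσ1 b, aux_b σ hσ1 c]
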